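/- The class of injective right R-modules is closed under direct limits (equivalently, is a definable subcategory of Mod-R) if and only if R is right noetherian. -/

import Mathlib

open CategoryTheory in
lemma exists_embedding_injective (S : Type) [Ring S] (M : Type) [AddCommGroup M] [Module S M] :
    ∃ (E : Type) (_ : AddCommGroup E) (_ : Module S E) (e : M →ₗ[S] E),
      Module.Injective S E ∧ Function.Injective e := by
  have : EnoughInjectives (ModuleCat.{0} S) := ModuleCat.enoughInjectives S
  let N := Injective.under (ModuleCat.of S M)
  have hN : CategoryTheory.Injective N := Injective.injective_under (ModuleCat.of S M)
  have hN' : CategoryTheory.Injective (ModuleCat.of S N) := by convert hN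
  refine ⟨N, inferInstance, inferInstance, (Injective.ι (ModuleCat.of S M)).hom, ?_, ?_⟩
  · exact Module.injective_module_of_injective_object S N
  · exact (ModuleCat.mono_iff_injective (Injective.ι (ModuleCat.of S M))).mp inferInstance

lemma injective_pi (S : Type) [Ring S] {κ : Type} (E : κ → Type)
    [∀ k, AddCommGroup (E k)] [∀ k, Module S (E k)]
    (h : ∀ k, Module.Injective S (E k)) : Module.Injective S (∀ k, E k) where
  out X Y _ _ _ _ f hf g := by
    choose h' hh' using fun k => (h k).out f hf ((LinearMap.proj k).comp g)
    exact ⟨LinearMap.pi h', fun x => funext fun k => hh' k x⟩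


section trunc
variable (S : Type) [Ring S] (E : ℕ → Type) [∀ n, AddCommGroup (E n)] [∀ n, Module S (E n)]

/-- Extension-by-zero map between finite products. -/
def truncMap (n m : ℕ) (_ : n ≤ m) :
    (∀ k : Fin n, E k) →ₗ[S] (∀ k : Fin m, E k) where
  toFun v k := if hk : (k : ℕ) < n then v ⟨k, hk⟩ else 0
  map_add' v w := by
    funext k
    by_cases hk : (k : ℕ) < n <;> simp [hk]
  map_smul' c v := by
    funext k
    by_cases hk : (k : ℕ) < n <;> simp [hk]

lemma truncMap_apply_pos {n m : ℕ} (h : n ≤ m) (v : ∀ k : Fin n, E k) (k : Fin m)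
    (hk : (k : ℕ) < n) : truncMap S E n m h v k = v ⟨k, hk⟩ := dif_pos hk

lemma truncMap_apply_neg {n m : ℕ} (h : n ≤ m) (v : ∀ k : Fin n, E k) (k : Fin m)
    (hk : ¬ (k : ℕ) < n) : truncMap S E n m h v k = 0 := dif_neg hk

instance truncMap_directedSystem :
    DirectedSystem (fun n => ∀ k : Fin n, E k) (fun n m h => truncMap S E n m h) := by
  constructor
  · intro n x
    funext k
    rw [truncMap_apply_pos S E le_rfl x k k.isLt]
  · intro p m n hnm hmp x
    funext k
    by_cases hk : (k : ℕ) < n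
    · rw [truncMap_apply_pos S E (hnm.trans hmp) x k hk,
        truncMap_apply_pos S E hmp _ k (lt_of_lt_of_le hk hnm),
        truncMap_apply_pos S E hnm x _ hk]
    · rw [truncMap_apply_neg S E (hnm.trans hmp) x k hk]
      by_cases hk' : (k : ℕ) < m
      · rw [truncMap_apply_pos S E hmp _ k hk', truncMap_apply_neg S E hnm x _ hk]
      · rw [truncMap_apply_neg S E hmp _ k hk']
end trunc

theorem auxB (S : Type) [Ring S]
    (H : ∀ (ι : Type) [Preorder ι] [Nonempty ι] [IsDirected ι (· ≤ ·)] [DecidableEq ι]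
        (G : ι → Type) [∀ i, AddCommGroup (G i)] [∀ i, Module S (G i)]
        (f : ∀ i j, i ≤ j → G i →ₗ[S] G j)
        [DirectedSystem G (fun i j hij => f i j hij)],
      (∀ i, Module.Injective S (G i)) → Module.Injective S (Module.DirectLimit G f)) :
    IsNoetherianRing S := by
  rw [isNoetherianRing_iff, ← monotone_stabilizes_iff_noetherian]
  intro I
  -- embed each S ⧸ I n into an injective module E n
  choose E i1 i2 e hEinj heinj using fun n : ℕ => exists_embedding_injective S (S ⧸ I n)
  letI : ∀ n, AddCommGroup (E n) := i1
  letI : ∀ n, Module S (E n) := i2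
  -- the directed system of finite products
  set G : ℕ → Type := fun n => ∀ k : Fin n, E k.val with hG
  set f' : ∀ n m : ℕ, n ≤ m → G n →ₗ[S] G m := fun n m h => truncMap S E n m h with hf'
  have hf'app : ∀ (n m : ℕ) (h : n ≤ m) (v : G n) (k : Fin m) (hk : (k : ℕ) < n),
      f' n m h v k = v ⟨k, hk⟩ := fun n m h v k hk => truncMap_apply_pos S E h v k hk
  have hf'app0 : ∀ (n m : ℕ) (h : n ≤ m) (v : G n) (k : Fin m) (hk : ¬ (k : ℕ) < n),
      f' n m h v k = 0 := fun n m h v k hk => truncMap_apply_neg S E h v k hk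
  haveI hds : DirectedSystem G (fun n m h => f' n m h) := truncMap_directedSystem S E
  have hGinj : ∀ n, Module.Injective S (G n) :=
    fun n => injective_pi S _ (fun k => hEinj k.val)
  have hLinj : Module.Injective S (Module.DirectLimit G f') := H ℕ G f' hGinj
  -- the big ideal
  set J : Ideal S := ⨆ n, I n with hJ
  have hmemJ : ∀ x : J, ∃ n, (x : S) ∈ I n :=
    fun x => (Submodule.mem_iSup_of_chain I x.1).mp x.2
  choose Nf hNf using hmemJ
  -- the maps into the pieces
  set q : ∀ k : ℕ, J →ₗ[S] E k := fun k => (e k).comp ((I k).mkQ.comp J.subtype) with hq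
  set t : ∀ n : ℕ, J →ₗ[S] G n := fun n => LinearMap.pi (fun k : Fin n => q k.val) with ht
  have hcomp : ∀ (n m : ℕ) (h : n ≤ m) (x : J), (x : S) ∈ I n →
      f' n m h (t n x) = t m x := by
    intro n m h x hx
    funext k
    by_cases hk : (k : ℕ) < n
    · rw [hf'app n m h _ k hk]; rfl
    · rw [hf'app0 n m h _ k hk]
      show 0 = q k.val x
      have hxk : (x : S) ∈ I k.val := I.monotone (le_of_not_gt hk) hx
      show (0 : E k.val) = e k.val ((I k.val).mkQ (J.subtype x))
      rw [show (I k.val).mkQ (J.subtype x) = 0 from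
        (Submodule.Quotient.mk_eq_zero _).mpr hxk, map_zero]
  have hof : ∀ (n m : ℕ) (x : J), (x : S) ∈ I n → (x : S) ∈ I m →
      Module.DirectLimit.of S ℕ G f' n (t n x) = Module.DirectLimit.of S ℕ G f' m (t m x) := by
    intro n m x hn hm
    have h1 : Module.DirectLimit.of S ℕ G f' n (t n x)
        = Module.DirectLimit.of S ℕ G f' (max n m) (t (max n m) x) := by
      rw [← hcomp n (max n m) (le_max_left n m) x hn, Module.DirectLimit.of_f]
      all_goals omega
    have h2 : Module.DirectLimit.of S ℕ G f' m (t m x)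
        = Module.DirectLimit.of S ℕ G f' (max n m) (t (max n m) x) := by
      rw [← hcomp m (max n m) (le_max_right n m) x hm, Module.DirectLimit.of_f]
      all_goals omega
    rw [h1, h2]
  -- the linear map J → L
  set h0 : J →ₗ[S] Module.DirectLimit G f' :=
    { toFun := fun x => Module.DirectLimit.of S ℕ G f' (Nf x) (t (Nf x) x)
      map_add' := by
        intro x y
        set p := max (Nf (x + y)) (max (Nf x) (Nf y)) with hp
        rw [hof (Nf (x+y)) p (x+y) (hNf _) (I.monotone (le_max_left _ _) (hNf _)),
          hof (Nf x) p x (hNf _) (I.monotone ((le_max_left _ _).trans (le_max_right _ _)) (hNf _)),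
          hof (Nf y) p y (hNf _) (I.monotone ((le_max_right _ _).trans (le_max_right _ _)) (hNf _)),
          map_add, map_add]
      map_smul' := by
        intro c x
        dsimp only [RingHom.id_apply]
        set p := max (Nf (c • x)) (Nf x) with hp
        rw [hof (Nf (c • x)) p (c • x) (hNf _) (I.monotone (le_max_left _ _) (hNf _)),
          hof (Nf x) p x (hNf _) (I.monotone (le_max_right _ _) (hNf _)),
          map_smul, map_smul] } with hh0
  -- extend to S by Baer
  obtain ⟨F, hF⟩ := Module.Baer.of_injective hLinj J h0
  obtain ⟨N₀, w, hw⟩ := Module.DirectLimit.exists_of (F 1)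
  -- the chain stabilizes at N₀
  have key : ∀ a : S, a ∈ J → ∀ k : ℕ, N₀ ≤ k → a ∈ I k := by
    intro a haJ k hk
    set x : J := ⟨a, haJ⟩ with hx
    have hFa : F a = Module.DirectLimit.of S ℕ G f' (Nf x) (t (Nf x) x) := hF a haJ
    have hFa' : F a = Module.DirectLimit.of S ℕ G f' N₀ (a • w) := by
      calc F a = F (a • 1) := by rw [smul_eq_mul, mul_one]
      _ = a • F 1 := map_smul F a 1
      _ = a • Module.DirectLimit.of S ℕ G f' N₀ w := by rw [hw]
      _ = Module.DirectLimit.of S ℕ G f' N₀ (a • w) := (map_smul _ a w).symm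
    set n := max (k + 1) (Nf x) with hn
    have hxn : (x : S) ∈ I n := I.monotone (le_max_right _ _) (hNf x)
    have h1 : Module.DirectLimit.of S ℕ G f' n (t n x)
        = Module.DirectLimit.of S ℕ G f' N₀ (a • w) := by
      rw [← hof (Nf x) n x (hNf x) hxn, ← hFa, hFa']
    set p := max n N₀ with hp
    have hnp : n ≤ p := le_max_left _ _
    have hN₀p : N₀ ≤ p := le_max_right _ _
    have h3 : Module.DirectLimit.of S ℕ G f' p
        (f' n p hnp (t n x) - f' N₀ p hN₀p (a • w)) = 0 := by
      rw [map_sub, Module.DirectLimit.of_f, Module.DirectLimit.of_f, h1, sub_self]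
      all_goals omega
    obtain ⟨p', hpp', hp'0⟩ := Module.DirectLimit.of.zero_exact h3
    rw [map_sub] at hp'0
    have e1 := DirectedSystem.map_map (f := fun n m h => f' n m h) hnp hpp' (t n x)
    have e2 := DirectedSystem.map_map (f := fun n m h => f' n m h) hN₀p hpp' (a • w)
    rw [e1, e2] at hp'0
    have h4 := sub_eq_zero.mp hp'0
    have hkp' : k < p' := lt_of_lt_of_le (Nat.lt_succ_self k)
      (((le_max_left (k+1) (Nf x))).trans (hnp.trans hpp'))
    have h5 := congrFun h4 ⟨k, hkp'⟩
    rw [hf'app n p' (hnp.trans hpp') (t n x) ⟨k, hkp'⟩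
        (lt_of_lt_of_le (Nat.lt_succ_self k) (le_max_left _ _)),
      hf'app0 N₀ p' (hN₀p.trans hpp') (a • w) ⟨k, hkp'⟩ (not_lt.mpr hk)] at h5
    -- h5 : t n x ⟨k, _⟩ = 0, i.e. e k (mk a) = 0
    have h6 : e k ((I k).mkQ a) = 0 := h5
    have h7 : (I k).mkQ a = 0 := heinj k (by rw [h6, map_zero])
    exact (Submodule.Quotient.mk_eq_zero _).mp h7
  refine ⟨N₀, fun m hm => le_antisymm (I.monotone hm) ?_⟩
  intro a ham
  exact key a (Submodule.mem_iSup_of_chain I a |>.mpr ⟨m, ham⟩) N₀ le_rfl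

/-- Noetherian direction: direct limits of injectives are injective. -/
theorem auxA (S : Type) [Ring S] [IsNoetherianRing S]
    (ι : Type) [Preorder ι] [Nonempty ι] [IsDirected ι (· ≤ ·)] [DecidableEq ι]
    (G : ι → Type) [∀ i, AddCommGroup (G i)] [∀ i, Module S (G i)]
    (f : ∀ i j, i ≤ j → G i →ₗ[S] G j)
    [DirectedSystem G (fun i j hij => f i j hij)]
    (hG : ∀ i, Module.Injective S (G i)) :
    Module.Injective S (Module.DirectLimit G f) := by
  set L := Module.DirectLimit G f with hL
  apply Module.Baer.injective
  intro I g
  -- choose finitely many generators of I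
  obtain ⟨n, x, hx⟩ := Submodule.fg_iff_exists_fin_generating_family.mp
    (IsNoetherian.noetherian I)
  have hxI : ∀ k, x k ∈ I := fun k => hx ▸ Submodule.subset_span ⟨k, rfl⟩
  -- the surjection (Fin n → S) → I
  set π : (Fin n → S) →ₗ[S] S := Fintype.linearCombination S x with hπ
  have hπr : LinearMap.range π = I := by
    rw [hπ, Fintype.range_linearCombination]; exact hx
  set π' : (Fin n → S) →ₗ[S] I :=
    LinearMap.codRestrict I π (fun v => hπr ▸ LinearMap.mem_range_self π v) with hπ'
  have hπ's : Function.Surjective π' := by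
    rintro ⟨y, hy⟩
    obtain ⟨v, hv⟩ := hπr.symm ▸ hy
    exact ⟨v, Subtype.ext hv⟩
  -- lift the generators' images to a common stage i0
  have hz : ∀ k : Fin n, ∃ i y, Module.DirectLimit.of S ι G f i y = g ⟨x k, hxI k⟩ :=
    fun k => Module.DirectLimit.exists_of _
  choose iz yz hyz using hz
  obtain ⟨i0, hi0⟩ := (Finset.univ.image iz).exists_le
  have hi0' : ∀ k, iz k ≤ i0 := fun k => hi0 _ (Finset.mem_image_of_mem _ (Finset.mem_univ k))
  set y : Fin n → G i0 := fun k => f (iz k) i0 (hi0' k) (yz k) with hy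
  have hyg : ∀ k, Module.DirectLimit.of S ι G f i0 (y k) = g ⟨x k, hxI k⟩ := by
    intro k; rw [hy]; rw [Module.DirectLimit.of_f]; exact hyz k
  set θ : (Fin n → S) →ₗ[S] G i0 := Fintype.linearCombination S y with hθ
  -- key commutation on the free module
  have hcomm : ∀ v, Module.DirectLimit.of S ι G f i0 (θ v) = g (π' v) := by
    have : (Module.DirectLimit.of S ι G f i0).comp θ = g.comp π' := by
      apply (Pi.basisFun S (Fin n)).ext
      intro k
      rw [Pi.basisFun_apply]
      simp only [LinearMap.comp_apply, hθ]
      rw [Fintype.linearCombination_apply_single]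
      rw [one_smul, hyg]
      congr 1
      apply Subtype.ext
      show x k = π (Pi.single k 1)
      rw [hπ]
      simp [Fintype.linearCombination_apply_single]
    intro v; exact congrFun (congrArg (fun F => F.toFun) this) v

  -- relations: finitely many generators of the kernel
  obtain ⟨m, w, hw⟩ := Submodule.fg_iff_exists_fin_generating_family.mp
    (IsNoetherian.noetherian (LinearMap.ker π'))
  have hθw : ∀ t : Fin m, Module.DirectLimit.of S ι G f i0 (θ (w t)) = 0 := by
    intro t
    have hwt : w t ∈ LinearMap.ker π' := hw ▸ Submodule.subset_span ⟨t, rfl⟩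
    rw [hcomm, LinearMap.mem_ker.mp hwt, map_zero]
  have hzero : ∀ t : Fin m, ∃ j, ∃ hij : i0 ≤ j, f i0 j hij (θ (w t)) = 0 :=
    fun t => Module.DirectLimit.of.zero_exact (hθw t)
  choose jt hjt hjt0 using hzero
  obtain ⟨j, hj⟩ := (insert i0 (Finset.univ.image jt)).exists_le
  have hij : i0 ≤ j := hj i0 (Finset.mem_insert_self _ _)
  have hjtj : ∀ t, jt t ≤ j := fun t =>
    hj _ (Finset.mem_insert_of_mem (Finset.mem_image_of_mem _ (Finset.mem_univ t)))
  set θ' : (Fin n → S) →ₗ[S] G j := (f i0 j hij).comp θ with hθ'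
  have hker : LinearMap.ker π' ≤ LinearMap.ker θ' := by
    rw [← hw, Submodule.span_le]
    rintro _ ⟨t, rfl⟩
    have := DirectedSystem.map_map (f := fun i j hij => f i j hij)
      hij (le_refl j) (θ (w t))
    show θ' (w t) = 0
    rw [hθ', LinearMap.comp_apply,
      ← DirectedSystem.map_map (f := fun i j hij => f i j hij) (hjt t) (hjtj t) (θ (w t)),
      hjt0 t, map_zero]
  have hofθ' : ∀ v, Module.DirectLimit.of S ι G f j (θ' v) = g (π' v) := by
    intro v
    rw [hθ', LinearMap.comp_apply, Module.DirectLimit.of_f, hcomm]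
  -- factor θ' through I
  set e := π'.quotKerEquivOfSurjective hπ's with he
  set ψ : I →ₗ[S] G j := ((LinearMap.ker π').liftQ θ' hker).comp e.symm.toLinearMap with hψdef
  have hψ : ∀ v, ψ (π' v) = θ' v := by
    intro v
    have h1 : e.symm (π' v) = Submodule.Quotient.mk v := by
      rw [LinearEquiv.symm_apply_eq]; rfl
    rw [hψdef, LinearMap.comp_apply, LinearEquiv.coe_toLinearMap, h1,
      Submodule.liftQ_apply]
  -- extend ψ using Baer criterion for G j
  obtain ⟨k, hk⟩ := Module.Baer.of_injective (hG j) I ψ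
  refine ⟨(Module.DirectLimit.of S ι G f j).comp k, ?_⟩
  intro a ha
  obtain ⟨v, hv⟩ := hπ's ⟨a, ha⟩
  rw [LinearMap.comp_apply, hk a ha, ← hv, hψ, hofθ', hv]

/-- The class of injective right `R`-modules (= left `Rᵐᵒᵖ`-modules) is
closed under direct limits iff `R` is right noetherian. -/
theorem stmt13 (R : Type) [Ring R] :
    (∀ (ι : Type) [Preorder ι] [Nonempty ι] [IsDirected ι (· ≤ ·)] [DecidableEq ι]
        (G : ι → Type) [∀ i, AddCommGroup (G i)] [∀ i, Module Rᵐᵒᵖ (G i)]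
        (f : ∀ i j, i ≤ j → G i →ₗ[Rᵐᵒᵖ] G j)
        [DirectedSystem G (fun i j hij => f i j hij)],
      (∀ i, Module.Injective Rᵐᵒᵖ (G i)) →
        Module.Injective Rᵐᵒᵖ (Module.DirectLimit G f)) ↔
      IsNoetherianRing Rᵐᵒᵖ := by
  constructor
  · intro H
    exact auxB Rᵐᵒᵖ H
  · intro h
    intro ι _ _ _ _ G _ _ f _ hG
    haveI : IsNoetherianRing Rᵐᵒᵖ := h
    exact auxA Rᵐᵒᵖ ι G f hG
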